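/- Let $Y$ be a compact metric space, let $f_1, \ldots, f_r \in C(Y, [0,1])$ and $\epsilon > 0$. For each $\ell \in [r]$ let $\mathcal{C}_\ell$ be a finite family of pairwise disjoint closed subsets of $Y$, each of diameter smaller than $\delta_{f_\ell}(\epsilon/2)$. Then there exist functions $\tilde{f}_1, \ldots, \tilde{f}_r \in C(Y, [0,1])$ such that: (a) $\|\tilde{f}_\ell - f_\ell\|_\infty \le \epsilon$ for all $\ell \in [r]$; (b) for every $\ell \in [r]$, distinct $C, C' \in \mathcal{C}_\ell$, $x \in C$, and $x' \in C'$, it holds $\tilde{f}_\ell(x) \ne \tilde{f}_\ell(x')$; (c) for every $\ell_1 \ne \ell_2$ in $[r]$ and every $x_1 \in \bigcup \mathcal{C}_{\ell_1}$, $x_2 \in \bigcup \mathcal{C}_{\ell_2}$, it holds $\tilde{f}_{\ell_1}(x_1) \ne \tilde{f}_{\ell_2}(x_2)$. -/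

import Mathlib

open scoped ENNReal

/-- The modulus `δ_f(ε)`: the supremum (in `[0,∞]`) of all `δ'` such that any two points at
distance at most `δ'` have `f`-values within `ε` of each other. -/
noncomputable def deltaMod {Y : Type*} [MetricSpace Y] (f : Y → ℝ) (ε : ℝ) : ℝ≥0∞ :=
  sSup {δ' : ℝ≥0∞ | ∀ y₁ y₂ : Y, edist y₁ y₂ ≤ δ' → |f y₁ - f y₂| ≤ ε}


/-- Injective choice from finitely many infinite sets of reals. -/
lemma exists_inj_choice {ι : Type*} [Fintype ι] (T : ι → Set ℝ) (hT : ∀ i, (T i).Infinite) :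
    ∃ v : ι → ℝ, (∀ i, v i ∈ T i) ∧ Function.Injective v := by
  classical
  suffices h : ∀ t : Finset ι, ∃ v : ι → ℝ, (∀ i, v i ∈ T i) ∧ Set.InjOn v ↑t by
    obtain ⟨v, hv, hinj⟩ := h Finset.univ
    exact ⟨v, hv, fun x y hxy => hinj (by simp) (by simp) hxy⟩
  intro t
  induction t using Finset.induction with
  | empty =>
    exact ⟨fun i => (hT i).nonempty.choose, fun i => (hT i).nonempty.choose_spec, by simp⟩
  | @insert a t ha ih =>
    obtain ⟨v, hv, hinj⟩ := ih
    have hinf : (T a \ v '' ↑t).Infinite := (hT a).diff (t.finite_toSet.image v)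
    obtain ⟨w, hw⟩ := hinf.nonempty
    refine ⟨Function.update v a w, ?_, ?_⟩
    · intro i
      rcases eq_or_ne i a with rfl | h
      · simpa using hw.1
      · simpa [Function.update_of_ne h] using hv i
    · intro x hx y hy hxy
      simp only [Finset.coe_insert, Set.mem_insert_iff, Finset.mem_coe] at hx hy
      rcases hx with rfl | hx <;> rcases hy with rfl | hy
      · rfl
      · exfalso
        rw [Function.update_self, Function.update_of_ne (by rintro rfl; exact ha hy)] at hxy
        exact hw.2 ⟨y, hy, hxy.symm⟩
      · exfalso
        rw [Function.update_self, Function.update_of_ne (by rintro rfl; exact ha hx)] at hxy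
        exact hw.2 ⟨x, hx, hxy⟩
      · rw [Function.update_of_ne (by rintro rfl; exact ha hx),
          Function.update_of_ne (by rintro rfl; exact ha hy)] at hxy
        exact hinj hx hy hxy

lemma clamp_lip (a b : ℝ) : |max 0 (min 1 a) - max 0 (min 1 b)| ≤ |a - b| := by
  rw [max_comm 0 (min 1 a), max_comm 0 (min 1 b)]
  refine (abs_max_sub_max_le_abs _ _ _).trans ?_
  refine (abs_min_sub_min_le_max 1 a 1 b).trans ?_
  simp

theorem stmt6 {Y : Type*} [MetricSpace Y] [CompactSpace Y] (r : ℕ)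
    (f : Fin r → C(Y, ℝ)) (hrange : ∀ ℓ y, f ℓ y ∈ Set.Icc (0:ℝ) 1)
    (ε : ℝ) (hε : 0 < ε)
    (C : Fin r → Set (Set Y))
    (hfin : ∀ ℓ, (C ℓ).Finite)
    (hclosed : ∀ ℓ, ∀ s ∈ C ℓ, IsClosed s)
    (hdisj : ∀ ℓ, (C ℓ).Pairwise Disjoint)
    (hdiam : ∀ ℓ, ∀ s ∈ C ℓ, EMetric.diam s < deltaMod (f ℓ) (ε / 2)) :
    ∃ ftil : Fin r → C(Y, ℝ),
      (∀ ℓ y, ftil ℓ y ∈ Set.Icc (0:ℝ) 1) ∧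
      (∀ ℓ, ∀ y, |ftil ℓ y - f ℓ y| ≤ ε) ∧
      (∀ ℓ, ∀ s ∈ C ℓ, ∀ s' ∈ C ℓ, s ≠ s' →
        ∀ x ∈ s, ∀ x' ∈ s', ftil ℓ x ≠ ftil ℓ x') ∧
      (∀ ℓ₁ ℓ₂ : Fin r, ℓ₁ ≠ ℓ₂ →
        ∀ x₁ ∈ ⋃₀ C ℓ₁, ∀ x₂ ∈ ⋃₀ C ℓ₂, ftil ℓ₁ x₁ ≠ ftil ℓ₂ x₂) := by
  classical
  -- oscillation bound on each piece
  have hosc : ∀ ℓ, ∀ s ∈ C ℓ, ∀ x ∈ s, ∀ x' ∈ s, |f ℓ x - f ℓ x'| ≤ ε / 2 := by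
    intro ℓ s hs x hx x' hx'
    obtain ⟨δ', hδ'mem, hδ'⟩ := lt_sSup_iff.1 (hdiam ℓ s hs)
    exact hδ'mem x x' ((EMetric.edist_le_diam_of_mem hx hx').trans hδ'.le)
  haveI hfinJ : ∀ ℓ : Fin r, Finite {s : Set Y // s ∈ C ℓ ∧ s.Nonempty} := by
    intro ℓ
    haveI := (hfin ℓ).to_subtype
    exact Finite.of_injective (fun j => (⟨j.1, j.2.1⟩ : {s // s ∈ C ℓ}))
      (fun j j' h => Subtype.ext (by simpa using congrArg Subtype.val h))
  haveI : Finite (Σ ℓ : Fin r, {s : Set Y // s ∈ C ℓ ∧ s.Nonempty}) := inferInstance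
  haveI : Fintype (Σ ℓ : Fin r, {s : Set Y // s ∈ C ℓ ∧ s.Nonempty}) := Fintype.ofFinite _
  -- pick a point in each nonempty piece
  choose y hy using fun i : Σ ℓ : Fin r, {s : Set Y // s ∈ C ℓ ∧ s.Nonempty} => i.2.2.2
  set a : (Σ ℓ : Fin r, {s : Set Y // s ∈ C ℓ ∧ s.Nonempty}) → ℝ := fun i => f i.1 (y i) with ha
  -- choose injective target values
  have hTinf : ∀ i, (Set.Icc (max 0 (a i - ε/4)) (min 1 (a i + ε/4))).Infinite := by
    intro i
    obtain ⟨h0, h1⟩ := hrange i.1 (y i)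
    have hai : a i = f i.1 (y i) := rfl
    refine Set.Icc_infinite ?_
    rw [hai]
    apply max_lt <;> apply lt_min <;> linarith
  obtain ⟨v, hvT, hvinj⟩ := exists_inj_choice _ hTinf
  have hv01 : ∀ i, v i ∈ Set.Icc (0:ℝ) 1 := by
    intro i
    obtain ⟨h1, h2⟩ := hvT i
    exact ⟨le_trans (le_max_left _ _) h1, le_trans h2 (min_le_left _ _)⟩
  have hva : ∀ i, |v i - a i| ≤ ε / 4 := by
    intro i
    obtain ⟨h1, h2⟩ := hvT i
    have := le_trans (le_max_right _ _) h1
    have := le_trans h2 (min_le_right _ _)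
    rw [abs_le]; constructor <;> linarith
  -- the closed set where pieces live
  set K : Fin r → Set Y := fun ℓ => ⋃ j : {s : Set Y // s ∈ C ℓ ∧ s.Nonempty}, (j : Set Y)
    with hK
  have hKclosed : ∀ ℓ, IsClosed (K ℓ) :=
    fun ℓ => isClosed_iUnion_of_finite fun j => hclosed ℓ j.1 j.2.1
  -- locally constant target function
  set g : Fin r → Y → ℝ := fun ℓ x =>
    if h : ∃ j : {s : Set Y // s ∈ C ℓ ∧ s.Nonempty}, x ∈ (j : Set Y) then
      v ⟨ℓ, h.choose⟩ else 0 with hgdef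
  have hg : ∀ (ℓ : Fin r) (j : {s : Set Y // s ∈ C ℓ ∧ s.Nonempty}) (x : Y),
      x ∈ (j : Set Y) → g ℓ x = v ⟨ℓ, j⟩ := by
    intro ℓ j x hx
    have hex : ∃ j' : {s : Set Y // s ∈ C ℓ ∧ s.Nonempty}, x ∈ (j' : Set Y) := ⟨j, hx⟩
    have h1 : g ℓ x = v ⟨ℓ, hex.choose⟩ := dif_pos hex
    have hj : hex.choose = j := by
      by_contra hne
      have hdis : Disjoint (hex.choose : Set Y) (j : Set Y) :=
        hdisj ℓ hex.choose.2.1 j.2.1 (fun hss => hne (Subtype.ext hss))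
      exact Set.disjoint_left.1 hdis hex.choose_spec hx
    rw [h1, hj]
  -- continuity of g on K ℓ
  have hgK : ∀ ℓ, ContinuousOn (g ℓ) (K ℓ) := by
    intro ℓ x hx
    obtain ⟨j, hxj⟩ := Set.mem_iUnion.1 hx
    set W : Set Y := ⋃ j' : {s : Set Y // s ∈ C ℓ ∧ s.Nonempty},
      (if j' = j then (∅ : Set Y) else (j' : Set Y)) with hW
    have hWclosed : IsClosed W := by
      refine isClosed_iUnion_of_finite fun j' => ?_
      split <;> [exact isClosed_empty; exact hclosed ℓ j'.1 j'.2.1]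
    have hxW : x ∉ W := by
      intro hxW
      obtain ⟨j', hxj'⟩ := Set.mem_iUnion.1 hxW
      by_cases hjj : j' = j
      · simp [hjj] at hxj'
      · rw [if_neg hjj] at hxj'
        exact Set.disjoint_left.1
          (hdisj ℓ j'.2.1 j.2.1 (fun hss => hjj (Subtype.ext hss))) hxj' hxj
    have hmem : K ℓ ∩ Wᶜ ∈ nhdsWithin x (K ℓ) :=
      inter_mem_nhdsWithin _ (hWclosed.isOpen_compl.mem_nhds hxW)
    have heq : g ℓ =ᶠ[nhdsWithin x (K ℓ)] fun _ => v ⟨ℓ, j⟩ := by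
      filter_upwards [hmem] with z hz
      obtain ⟨hzK, hzW⟩ := hz
      obtain ⟨j', hzj'⟩ := Set.mem_iUnion.1 hzK
      have hjj : j' = j := by
        by_contra hne
        exact hzW (Set.mem_iUnion.2 ⟨j', by rw [if_neg hne]; exact hzj'⟩)
      exact hg ℓ j z (hjj ▸ hzj')
    exact continuousWithinAt_const.congr_of_eventuallyEq heq (hg ℓ j x hxj)
  -- bound on K
  have hbd : ∀ ℓ x, x ∈ K ℓ → g ℓ x - f ℓ x ∈ Set.Icc (-(3*ε/4)) (3*ε/4) := by
    intro ℓ x hx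
    obtain ⟨j, hxj⟩ := Set.mem_iUnion.1 hx
    rw [hg ℓ j x hxj]
    have h1 := hva ⟨ℓ, j⟩
    have hai : a ⟨ℓ, j⟩ = f ℓ (y ⟨ℓ, j⟩) := rfl
    rw [hai] at h1
    have h2 := hosc ℓ j.1 j.2.1 (y ⟨ℓ, j⟩) (hy ⟨ℓ, j⟩) x hxj
    rw [abs_le] at h1 h2
    rw [Set.mem_Icc]
    constructor <;> linarith [h1.1, h1.2, h2.1, h2.2]
  -- Tietze extension of the difference
  have hext : ∀ ℓ : Fin r, ∃ H : C(Y, ℝ),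
      (∀ z, H z ∈ Set.Icc (-(3*ε/4)) (3*ε/4)) ∧
      (∀ x ∈ K ℓ, H x = g ℓ x - f ℓ x) := by
    intro ℓ
    have hcont : Continuous ((K ℓ).restrict (fun x => g ℓ x - f ℓ x)) :=
      ContinuousOn.restrict ((hgK ℓ).sub (f ℓ).continuous.continuousOn)
    obtain ⟨H, hHmem, hHres⟩ := ContinuousMap.exists_restrict_eq_forall_mem_of_closed
      (⟨_, hcont⟩ : C(K ℓ, ℝ)) (t := Set.Icc (-(3*ε/4)) (3*ε/4))
      (fun z => hbd ℓ z z.2) (Set.nonempty_Icc.2 (by linarith)) (hKclosed ℓ)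
    refine ⟨H, hHmem, fun x hx => ?_⟩
    have := congrArg (fun φ => φ ⟨x, hx⟩) hHres
    exact this
  choose H hHmem hHeq using hext
  -- the perturbed functions
  set ftil : Fin r → C(Y, ℝ) := fun ℓ =>
    ⟨fun x => max 0 (min 1 (f ℓ x + H ℓ x)),
      (continuous_const.max (continuous_const.min ((f ℓ).continuous.add (H ℓ).continuous)))⟩
    with hftil
  have hvalue : ∀ (ℓ : Fin r) (j : {s : Set Y // s ∈ C ℓ ∧ s.Nonempty}) (x : Y),
      x ∈ (j : Set Y) → ftil ℓ x = v ⟨ℓ, j⟩ := by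
    intro ℓ j x hx
    have hxK : x ∈ K ℓ := Set.mem_iUnion.2 ⟨j, hx⟩
    have h1 : f ℓ x + H ℓ x = v ⟨ℓ, j⟩ := by
      rw [hHeq ℓ x hxK, hg ℓ j x hx]; ring
    obtain ⟨hv0, hv1⟩ := hv01 ⟨ℓ, j⟩
    show max 0 (min 1 (f ℓ x + H ℓ x)) = v ⟨ℓ, j⟩
    rw [h1, min_eq_right hv1, max_eq_right hv0]
  refine ⟨ftil, ?_, ?_, ?_, ?_⟩
  · intro ℓ x
    constructor
    · exact le_max_left _ _
    · exact max_le zero_le_one (min_le_left _ _)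
  · intro ℓ x
    have hle : |ftil ℓ x - f ℓ x| ≤ |H ℓ x| := by
      obtain ⟨h0, h1⟩ := hrange ℓ x
      have hfx : f ℓ x = max 0 (min 1 (f ℓ x)) := by
        rw [min_eq_right h1, max_eq_right h0]
      calc |ftil ℓ x - f ℓ x| = |max 0 (min 1 (f ℓ x + H ℓ x)) - max 0 (min 1 (f ℓ x))| := by
            rw [← hfx]; rfl
        _ ≤ |(f ℓ x + H ℓ x) - f ℓ x| := clamp_lip _ _
        _ = |H ℓ x| := by ring_nf
    refine hle.trans ?_
    obtain ⟨hH1, hH2⟩ := hHmem ℓ x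
    rw [abs_le]; constructor <;> linarith
  · intro ℓ s hs s' hs' hne x hx x' hx'
    have hvs := hvalue ℓ ⟨s, hs, ⟨x, hx⟩⟩ x hx
    have hvs' := hvalue ℓ ⟨s', hs', ⟨x', hx'⟩⟩ x' hx'
    rw [hvs, hvs']
    intro hcontra
    exact hne (congrArg
      (fun p : (Σ ℓ : Fin r, {s : Set Y // s ∈ C ℓ ∧ s.Nonempty}) => (p.2 : Set Y))
      (hvinj hcontra))
  · intro ℓ₁ ℓ₂ hℓ x₁ hx₁ x₂ hx₂
    obtain ⟨s₁, hs₁, hxs₁⟩ := hx₁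
    obtain ⟨s₂, hs₂, hxs₂⟩ := hx₂
    rw [hvalue ℓ₁ ⟨s₁, hs₁, ⟨x₁, hxs₁⟩⟩ x₁ hxs₁, hvalue ℓ₂ ⟨s₂, hs₂, ⟨x₂, hxs₂⟩⟩ x₂ hxs₂]
    intro hcontra
    exact hℓ (congrArg
      (fun p : (Σ ℓ : Fin r, {s : Set Y // s ∈ C ℓ ∧ s.Nonempty}) => p.1)
      (hvinj hcontra))
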